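/- arXiv:2112.10120 — 3 statements merged into one kernel-verified Lean document; each statement's English description precedes it below -/
import Mathlib

section
/- If a group Γ acts by isometries on a metric space X in which every ball of finite radius is finite (X is locally finite), then the stabilizer of any point is an almost normal subgroup of Γ. -/
open Pointwise

/-- If a group acts by isometries on a locally finite metric space, then any point
stabilizer is an almost normal subgroup. -/
theorem stabilizer_almostNormal_of_isometric_action {Γ X : Type*} [Group Γ]
    [MetricSpace X] [MulAction Γ X]
    (h_iso : ∀ γ : Γ, Isometry (fun x : X => γ • x))
    (h_fin : ∀ (x : X) (r : ℝ), (Metric.closedBall x r).Finite)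
    (x₀ : X) :
    ∀ γ : Γ, (MulAut.conj γ • MulAction.stabilizer Γ x₀).relIndex
      (MulAction.stabilizer Γ x₀) ≠ 0 := by
  intro γ
  set Λ := MulAction.stabilizer Γ x₀ with hΛ
  set y := γ • x₀ with hy
  have hsub : (MulAut.conj γ • Λ).subgroupOf Λ = MulAction.stabilizer Λ y := by
    ext g
    simp only [Subgroup.mem_subgroupOf, Subgroup.mem_pointwise_smul_iff_inv_smul_mem,
      MulAction.mem_stabilizer_iff, hΛ, hy, Subgroup.smul_def]
    have e : ((MulAut.conj γ)⁻¹ • (g : Γ)) = γ⁻¹ * g * γ := by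
      rw [MulAut.smul_def, MulAut.conj_inv_apply]
    rw [e]
    constructor
    · intro h
      rw [mul_smul, mul_smul] at h
      have := congrArg (γ • ·) h
      simpa using this
    · intro h
      rw [mul_smul, mul_smul]
      rw [h]
      rw [inv_smul_smul]
  rw [Subgroup.relIndex, hsub]
  -- orbit of y under Λ is contained in a closed ball
  have horb : (MulAction.orbit Λ y).Finite := by
    apply (h_fin x₀ (dist y x₀)).subset
    rintro _ ⟨g, rfl⟩
    have hg : (g : Γ) • x₀ = x₀ := g.2
    have : dist ((g : Γ) • y) x₀ = dist y x₀ := by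
      conv_lhs => rw [← hg]
      exact (h_iso (g : Γ)).dist_eq y x₀
    simp only [Metric.mem_closedBall]
    rw [Subgroup.smul_def]
    rw [this]
  have : Finite (MulAction.orbit Λ y) := horb
  have : Finite (Λ ⧸ MulAction.stabilizer Λ y) :=
    Finite.of_equiv _ (MulAction.orbitEquivQuotientStabilizer Λ y)
  exact Subgroup.index_ne_zero_of_finite
end

section
/- SL(2, ℤ) is an almost normal subgroup of SL(2, ℤ[1/p]) for any prime p. -/
open Pointwise

/-- `SL(2, ℤ)` (embedded as the matrices with integer entries) is an almost normal
subgroup of `SL(2, ℤ[1/p])`, for any prime `p`. -/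
theorem SL2Z_almostNormal_in_SL2ZpInv (p : ℕ) (hp : p.Prime) :
    ∀ γ : Matrix.SpecialLinearGroup (Fin 2) (Localization.Away (p : ℤ)),
      ((MulAut.conj γ •
          (Matrix.SpecialLinearGroup.map (n := Fin 2)
            (algebraMap ℤ (Localization.Away (p : ℤ)))).range)).relIndex
        (Matrix.SpecialLinearGroup.map (n := Fin 2)
          (algebraMap ℤ (Localization.Away (p : ℤ)))).range ≠ 0 := by
  intro γ
  set f : ℤ →+* (Localization.Away (p : ℤ)) := algebraMap ℤ (Localization.Away (p : ℤ)) with hf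
  have hp0 : (p : ℤ) ≠ 0 := by exact_mod_cast hp.ne_zero
  have hinj : Function.Injective f :=
    IsLocalization.injective (Localization.Away (p : ℤ))
      (powers_le_nonZeroDivisors_of_noZeroDivisors hp0)
  set Φ := Matrix.SpecialLinearGroup.map (n := Fin 2)
    (algebraMap ℤ (Localization.Away (p : ℤ))) with hΦ
  have hΦinj : Function.Injective Φ := by
    intro g g' h
    ext i j
    have h2 := congrArg
      (fun x : Matrix.SpecialLinearGroup (Fin 2) (Localization.Away (p : ℤ)) =>
        (x : Matrix (Fin 2) (Fin 2) (Localization.Away (p : ℤ))) i j) h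
    simp only [hΦ, Matrix.SpecialLinearGroup.map_apply_coe, RingHom.mapMatrix_apply,
      Matrix.map_apply] at h2
    exact hinj h2
  set A : Matrix (Fin 2) (Fin 2) (Localization.Away (p : ℤ)) := ↑γ with hA
  set B : Matrix (Fin 2) (Fin 2) (Localization.Away (p : ℤ)) := ↑(γ⁻¹) with hB
  have hBA : B * A = 1 := by
    rw [hA, hB, ← Matrix.SpecialLinearGroup.coe_mul, inv_mul_cancel,
      Matrix.SpecialLinearGroup.coe_one]
  -- common denominator
  obtain ⟨b, hb⟩ := IsLocalization.exist_integer_multiples_of_finite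
      (Submonoid.powers (p : ℤ)) (S := Localization.Away (p : ℤ))
      (fun x : Fin 2 × Fin 2 × Bool => if x.2.2 then A x.1 x.2.1 else B x.1 x.2.1)
  obtain ⟨k, hk⟩ := b.2
  have hAint : ∀ i j : Fin 2, ∃ a : ℤ, f a = f ((p:ℤ)^k) * A i j := by
    intro i j
    obtain ⟨a, ha⟩ := hb (i, j, true)
    exact ⟨a, by rw [ha]; simp [Algebra.smul_def, hk]⟩
  have hBint : ∀ i j : Fin 2, ∃ a : ℤ, f a = f ((p:ℤ)^k) * B i j := by
    intro i j
    obtain ⟨a, ha⟩ := hb (i, j, false)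
    exact ⟨a, by rw [ha]; simp [Algebra.smul_def, hk]⟩
  choose A' hA' using hAint
  choose B' hB' using hBint
  set N : ℕ := p ^ (2 * k) with hN
  haveI : NeZero N := ⟨pow_ne_zero _ hp.ne_zero⟩
  set ψ := Matrix.SpecialLinearGroup.map (n := Fin 2) (Int.castRingHom (ZMod N)) with hψ
  -- the congruence subgroup maps into the conjugate
  have hle : ψ.ker.map Φ ≤ MulAut.conj γ • Φ.range := by
    rintro x ⟨g, hg, rfl⟩
    rw [Subgroup.mem_pointwise_smul_iff_inv_smul_mem]
    have hg1 : ψ g = 1 := hg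
    rw [hψ] at hg1
    have hdvd : ∀ i j : Fin 2, (N : ℤ) ∣ ((g : Matrix (Fin 2) (Fin 2) ℤ) - 1) i j := by
      intro i j
      have h2 := congrArg
        (fun x : Matrix.SpecialLinearGroup (Fin 2) (ZMod N) =>
          (x : Matrix (Fin 2) (Fin 2) (ZMod N)) i j) hg1
      simp only [Matrix.SpecialLinearGroup.map_apply_coe, RingHom.mapMatrix_apply,
        Matrix.map_apply, Int.coe_castRingHom, Matrix.SpecialLinearGroup.coe_one] at h2
      rw [← ZMod.intCast_zmod_eq_zero_iff_dvd]
      simp only [Matrix.sub_apply, Int.cast_sub, h2]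
      by_cases hij : i = j <;> simp [hij, Matrix.one_apply]
    set M : Matrix (Fin 2) (Fin 2) ℤ :=
      Matrix.of fun i j => ((g : Matrix (Fin 2) (Fin 2) ℤ) - 1) i j / (N : ℤ) with hM
    have hMN : ∀ i j : Fin 2,
        ((N : ℕ) : ℤ) * M i j = ((g : Matrix (Fin 2) (Fin 2) ℤ) - 1) i j := by
      intro i j
      exact Int.mul_ediv_cancel' (hdvd i j)
    set C : Matrix (Fin 2) (Fin 2) ℤ :=
      1 + (Matrix.of B') * M * (Matrix.of A') with hC
    have hmapM : ∀ i j : Fin 2, f ((N : ℕ) : ℤ) * (M.map f) i j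
        = ((g : Matrix (Fin 2) (Fin 2) ℤ).map f - 1) i j := by
      intro i j
      have h4 := congrArg f (hMN i j)
      simp only [map_mul, Matrix.sub_apply, map_sub] at h4
      simp only [Matrix.sub_apply, Matrix.map_apply]
      rw [h4]
      congr 1
      by_cases hij : i = j <;> simp [hij, Matrix.one_apply]
    have hcc : f ((p:ℤ)^k) * f ((p:ℤ)^k) = f ((N : ℕ) : ℤ) := by
      rw [← map_mul]
      congr 1
      push_cast [hN]
      ring
    have hmid : ((Matrix.of B').map f) * (M.map f) * ((Matrix.of A').map f)
        = B * ((g : Matrix (Fin 2) (Fin 2) ℤ).map f - 1) * A := by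
      ext i j
      simp only [Matrix.mul_apply, Finset.sum_mul]
      refine Finset.sum_congr rfl fun l _ => Finset.sum_congr rfl fun m _ => ?_
      have h1 : (Matrix.of B').map f i m = f ((p:ℤ)^k) * B i m := by
        simp [Matrix.map_apply, hB']
      have h2 : (Matrix.of A').map f l j = f ((p:ℤ)^k) * A l j := by
        simp [Matrix.map_apply, hA']
      rw [h1, h2, ← hmapM m l, ← hcc]
      ring
    have hkey : C.map f = B * ((g : Matrix (Fin 2) (Fin 2) ℤ).map f) * A := by
      calc C.map f = 1 + ((Matrix.of B').map f) * (M.map f) * ((Matrix.of A').map f) := by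
            rw [hC, Matrix.map_add _ f.map_add, Matrix.map_one f f.map_zero f.map_one,
              Matrix.map_mul, Matrix.map_mul]
        _ = 1 + B * ((g : Matrix (Fin 2) (Fin 2) ℤ).map f - 1) * A := by rw [hmid]
        _ = B * ((g : Matrix (Fin 2) (Fin 2) ℤ).map f) * A := by
            rw [Matrix.mul_sub, Matrix.sub_mul, Matrix.mul_one, hBA]
            abel
    have hdetC : C.det = 1 := by
      apply hinj
      rw [RingHom.map_det, RingHom.mapMatrix_apply, hkey, Matrix.det_mul, Matrix.det_mul]
      have hdg : ((g : Matrix (Fin 2) (Fin 2) ℤ).map f).det = 1 := by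
        rw [← RingHom.mapMatrix_apply, ← RingHom.map_det, g.prop, map_one]
      rw [hdg, hA, hB, Matrix.SpecialLinearGroup.det_coe, Matrix.SpecialLinearGroup.det_coe]
      simp
    refine ⟨⟨C, hdetC⟩, ?_⟩
    have hco : (MulAut.conj γ)⁻¹ • Φ g = γ⁻¹ * Φ g * γ := by
      simp [MulAut.conj_inv_apply]
    rw [hco]
    apply Subtype.ext
    rw [Matrix.SpecialLinearGroup.coe_mul, Matrix.SpecialLinearGroup.coe_mul]
    calc ((Φ ⟨C, hdetC⟩ : Matrix.SpecialLinearGroup (Fin 2) (Localization.Away (p : ℤ)))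
          : Matrix (Fin 2) (Fin 2) (Localization.Away (p : ℤ)))
        = C.map f := rfl
      _ = B * ((g : Matrix (Fin 2) (Fin 2) ℤ).map f) * A := hkey
      _ = ↑(γ⁻¹) * (Φ g : Matrix (Fin 2) (Fin 2) (Localization.Away (p : ℤ))) * ↑γ := rfl
  -- finite index of the congruence subgroup
  have hld : (MulAut.conj γ • Φ.range).relIndex Φ.range ∣ (ψ.ker.map Φ).relIndex Φ.range :=
    Subgroup.relIndex_dvd_of_le_left _ hle
  have hne : (ψ.ker.map Φ).relIndex Φ.range ≠ 0 := by
    have h1 : ((ψ.ker.map Φ).comap Φ).relIndex ⊤ = (ψ.ker.map Φ).relIndex (Subgroup.map Φ ⊤) :=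
      Subgroup.relIndex_comap _ Φ ⊤
    rw [Subgroup.comap_map_eq_self_of_injective hΦinj, ← MonoidHom.range_eq_map,
      Subgroup.relIndex_top_right] at h1
    rw [← h1, Subgroup.index_ker]
    exact Nat.card_ne_zero.mpr ⟨⟨1, 1, map_one _⟩, inferInstance⟩
  intro h0
  rw [h0] at hld
  exact hne (zero_dvd_iff.mp hld)
end

section
/- Let H, K be subgroups of a group Γ with H ≤ K and [K : H] < ∞. If H is almost normal in Γ, then K is almost normal in Γ. -/
open Pointwise

/-- If `H ≤ K ≤ Γ` with `H` of finite index in `K`, and `H` is almost normal in `Γ`,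
then `K` is almost normal in `Γ`. -/
theorem almostNormal_of_finiteIndex_over {Γ : Type*} [Group Γ] (H K : Subgroup Γ)
    (hHK : H ≤ K) (hfin : H.relIndex K ≠ 0)
    (hH : ∀ γ : Γ, (MulAut.conj γ • H).relIndex H ≠ 0) :
    ∀ γ : Γ, (MulAut.conj γ • K).relIndex K ≠ 0 := by
  intro γ
  set A := (MulAut.conj γ • H) ⊓ H with hA
  have hAH : A.relIndex H ≠ 0 := by
    rw [hA, Subgroup.inf_relIndex_right]; exact hH γ
  have hAK : A.relIndex K ≠ 0 := by
    rw [← Subgroup.relIndex_mul_relIndex A H K inf_le_right hHK]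
    exact mul_ne_zero hAH hfin
  have h1 : (MulAut.conj γ • H).relIndex K ≠ 0 := fun h =>
    hAK (Nat.eq_zero_of_zero_dvd (h ▸ Subgroup.relIndex_dvd_of_le_left K inf_le_left))
  have h2 : MulAut.conj γ • H ≤ MulAut.conj γ • K := by
    exact Subgroup.pointwise_smul_le_pointwise_smul_iff.mpr hHK
  exact fun h => h1 (Nat.eq_zero_of_zero_dvd (h ▸ Subgroup.relIndex_dvd_of_le_left K h2))
end
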